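/- The infinite product ∏_{n=1}^∞ (∏_{k=0}^n (k+1)^{(-1)^{k+1} binom(n,k)})^{1/2^n}, where the outer exponent 1/2^n and the inner exponents are real powers of positive reals, converges and equals π/2. -/

import Mathlib

open Filter Real Finset Topology

noncomputable def cc (k : ℕ) : ℝ := (-1 : ℝ)^(k+1) * Real.log (k+1)
noncomputable def AA (n : ℕ) : ℝ := ∑ k ∈ Finset.Icc 1 n, cc k
noncomputable def BB (n : ℕ) : ℝ := AA n + AA (n-1)

lemma cc_zero : cc 0 = 0 := by simp [cc]
lemma AA_zero : AA 0 = 0 := by simp [AA]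
lemma AA_succ (n : ℕ) : AA (n+1) = AA n + cc (n+1) := by
  rw [AA, AA, Finset.sum_Icc_succ_top (by omega : 1 ≤ n+1)]
lemma BB_zero : BB 0 = 0 := by simp [BB, AA_zero]
lemma BB_succ (i : ℕ) : BB (i+1) = BB i + cc i + cc (i+1) := by
  cases i with
  | zero => simp [BB, AA_zero, AA_succ, cc_zero]
  | succ j =>
      show AA (j+2) + AA (j+1) = (AA (j+1) + AA j) + cc (j+1) + cc (j+2)
      rw [AA_succ (j+1), AA_succ j]
      ring

lemma aux_pascal (g : ℕ → ℝ) (hg : g 0 = 0) (N : ℕ) :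
    ∑ i ∈ range (N+2), ((N+1).choose i : ℝ) * g i
      = ∑ i ∈ range (N+1), (N.choose i : ℝ) * (g i + g (i+1)) := by
  have h1 : ∑ i ∈ range (N+1), (N.choose (i+1) : ℝ) * g (i+1)
      = ∑ i ∈ range (N+1), (N.choose i : ℝ) * g i := by
    have e1 := Finset.sum_range_succ' (fun i => (N.choose i : ℝ) * g i) (N+1)
    have e2 := Finset.sum_range_succ (fun i => (N.choose i : ℝ) * g i) (N+1)
    rw [e2] at e1
    simp only [Nat.choose_succ_self, Nat.cast_zero, zero_mul, add_zero, hg, mul_zero] at e1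
    exact e1.symm
  rw [Finset.sum_range_succ' (fun i => ((N+1).choose i : ℝ) * g i) (N+1)]
  simp only [hg, mul_zero, add_zero]
  have : ∀ i, (((N+1).choose (i+1) : ℝ)) * g (i+1)
      = (N.choose i : ℝ) * g (i+1) + (N.choose (i+1) : ℝ) * g (i+1) := by
    intro i
    rw [Nat.choose_succ_succ]
    push_cast
    ring
  rw [Finset.sum_congr rfl (fun i _ => this i), Finset.sum_add_distrib, h1]
  rw [← Finset.sum_add_distrib]
  congr 1; funext i; ring

noncomputable def SS (N : ℕ) : ℝ :=
  ∑ n ∈ Finset.Icc 1 N, (1/2^n : ℝ) * ∑ k ∈ range (n+1), (n.choose k : ℝ) * cc k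

lemma key (N : ℕ) :
    SS N = (1/2^N : ℝ) * ∑ i ∈ range (N+1), (N.choose i : ℝ) * BB i := by
  induction N with
  | zero => simp [SS, BB_zero]
  | succ N ih =>
      have hstep : SS (N+1) = SS N
          + (1/2^(N+1) : ℝ) * ∑ k ∈ range (N+2), ((N+1).choose k : ℝ) * cc k := by
        rw [SS, SS, Finset.sum_Icc_succ_top (by omega : 1 ≤ N+1)]
      rw [hstep, ih, aux_pascal cc cc_zero N, aux_pascal BB BB_zero N]
      have hB : ∀ i, (N.choose i : ℝ) * (BB i + BB (i+1))
          = 2*((N.choose i : ℝ) * BB i) + (N.choose i : ℝ) * (cc i + cc (i+1)) := by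
        intro i; rw [BB_succ]; ring
      rw [Finset.sum_congr rfl (fun i _ => hB i), Finset.sum_add_distrib, ← Finset.mul_sum]
      rw [pow_succ]
      ring

lemma binmean0 {b : ℕ → ℝ} (hb : Tendsto b atTop (𝓝 0)) :
    Tendsto (fun N : ℕ => (1/2^N : ℝ) * ∑ i ∈ range (N+1), (N.choose i : ℝ) * b i)
      atTop (𝓝 0) := by
  rw [Metric.tendsto_atTop] at hb ⊢
  intro ε hε
  obtain ⟨K, hK⟩ := hb (ε/4) (by positivity)
  set M : ℝ := (∑ j ∈ range K, |b j|) + 1 with hMdef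
  have hM0 : 0 < M := by positivity
  have hM : ∀ i ∈ range K, |b i| ≤ M := by
    intro i hi
    have := Finset.single_le_sum (f := fun j => |b j|) (fun j _ => abs_nonneg _) hi
    simp only [hMdef]; linarith
  have hT : Tendsto (fun N : ℕ => ((K : ℝ) * M) * ((N:ℝ)^K / 2^N)) atTop (𝓝 0) := by
    simpa using
      (tendsto_pow_const_div_const_pow_of_one_lt K (by norm_num : (1:ℝ) < 2)).const_mul
        ((K:ℝ) * M)
  obtain ⟨N₁, hN₁⟩ := Metric.tendsto_atTop.mp hT (ε/4) (by positivity)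
  refine ⟨max (max N₁ K) 1, fun N hN => ?_⟩
  have hN1 : N₁ ≤ N := le_trans (le_trans (le_max_left _ _) (le_max_left _ _)) hN
  have hNK : K ≤ N := le_trans (le_trans (le_max_right _ _) (le_max_left _ _)) hN
  have hN1' : 1 ≤ N := le_trans (le_max_right _ _) hN
  have h2 : (0:ℝ) < 2^N := by positivity
  rw [Real.dist_eq, sub_zero]
  have habs : |(1/2^N : ℝ) * ∑ i ∈ range (N+1), (N.choose i : ℝ) * b i|
      ≤ (1/2^N : ℝ) * ∑ i ∈ range (N+1), (N.choose i : ℝ) * |b i| := by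
    rw [abs_mul, abs_of_nonneg (by positivity : (0:ℝ) ≤ 1/2^N)]
    refine mul_le_mul_of_nonneg_left ?_ (by positivity)
    refine le_trans (Finset.abs_sum_le_sum_abs _ _) (le_of_eq ?_)
    refine Finset.sum_congr rfl fun i _ => ?_
    rw [abs_mul, abs_of_nonneg (Nat.cast_nonneg _)]
  have hsplit : ∑ i ∈ range (N+1), (N.choose i : ℝ) * |b i|
      = ∑ i ∈ range K, (N.choose i : ℝ) * |b i|
        + ∑ i ∈ Ico K (N+1), (N.choose i : ℝ) * |b i| := by
    rw [range_eq_Ico]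
    rw [range_eq_Ico]; exact (Finset.sum_Ico_consecutive (fun i => (N.choose i : ℝ) * |b i|) (k := N+1) (Nat.zero_le K) (by omega)).symm
  have bound1 : ∑ i ∈ range K, (N.choose i : ℝ) * |b i| ≤ (K : ℝ) * ((N:ℝ)^K * M) := by
    refine le_trans (Finset.sum_le_card_nsmul _ _ ((N:ℝ)^K * M) ?_) (by
      simp [Finset.card_range, nsmul_eq_mul])
    intro i hi
    have hc : (N.choose i : ℝ) ≤ (N:ℝ)^K := by
      have : N.choose i ≤ N^K :=
        le_trans (Nat.choose_le_pow _ _) (Nat.pow_le_pow_right hN1'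
          (le_of_lt (Finset.mem_range.mp hi)))
      exact_mod_cast this
    exact mul_le_mul hc (hM i hi) (abs_nonneg _) (by positivity)
  have bound2 : ∑ i ∈ Ico K (N+1), (N.choose i : ℝ) * |b i| ≤ 2^N * (ε/4) := by
    calc ∑ i ∈ Ico K (N+1), (N.choose i : ℝ) * |b i|
        ≤ ∑ i ∈ Ico K (N+1), (N.choose i : ℝ) * (ε/4) := by
          refine Finset.sum_le_sum fun i hi => ?_
          refine mul_le_mul_of_nonneg_left ?_ (Nat.cast_nonneg _)
          have := hK i (Finset.mem_Ico.mp hi).1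
          rw [Real.dist_eq, sub_zero] at this
          exact le_of_lt this
      _ = (∑ i ∈ Ico K (N+1), (N.choose i : ℝ)) * (ε/4) := by
          rw [Finset.sum_mul]
      _ ≤ 2^N * (ε/4) := by
          refine mul_le_mul_of_nonneg_right ?_ (by positivity)
          have hsub : ∑ i ∈ Ico K (N+1), (N.choose i : ℝ)
              ≤ ∑ i ∈ range (N+1), (N.choose i : ℝ) := by
            refine Finset.sum_le_sum_of_subset_of_nonneg ?_
              (fun i _ _ => Nat.cast_nonneg _)
            rw [range_eq_Ico]
            exact Finset.Ico_subset_Ico (Nat.zero_le _) le_rfl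
          have hchoose : ∑ i ∈ range (N+1), (N.choose i : ℝ) = 2^N := by
            exact_mod_cast congrArg (Nat.cast : ℕ → ℝ) (Nat.sum_range_choose N)
          linarith
  have hN₁' := hN₁ N hN1
  rw [Real.dist_eq, sub_zero] at hN₁'
  have hTpos : (0:ℝ) ≤ ((K : ℝ) * M) * ((N:ℝ)^K / 2^N) := by positivity
  rw [abs_of_nonneg hTpos] at hN₁'
  calc |(1/2^N : ℝ) * ∑ i ∈ range (N+1), (N.choose i : ℝ) * b i|
      ≤ (1/2^N : ℝ) * ((K : ℝ) * ((N:ℝ)^K * M) + 2^N * (ε/4)) := by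
        rw [hsplit] at habs
        exact le_trans habs (mul_le_mul_of_nonneg_left (add_le_add bound1 bound2) (by positivity))
    _ = ((K : ℝ) * M) * ((N:ℝ)^K / 2^N) + ε/4 := by
        field_simp
    _ < ε/4 + ε/4 := by linarith
    _ < ε := by linarith

lemma binmean {b : ℕ → ℝ} {L : ℝ} (hb : Tendsto b atTop (𝓝 L)) :
    Tendsto (fun N : ℕ => (1/2^N : ℝ) * ∑ i ∈ range (N+1), (N.choose i : ℝ) * b i)
      atTop (𝓝 L) := by
  have h0 : Tendsto (fun i => b i - L) atTop (𝓝 0) := by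
    simpa using hb.sub_const L
  have heq : ∀ N : ℕ, (1/2^N : ℝ) * ∑ i ∈ range (N+1), (N.choose i : ℝ) * (b i - L)
      = (1/2^N : ℝ) * (∑ i ∈ range (N+1), (N.choose i : ℝ) * b i) - L := by
    intro N
    have hchoose : ∑ i ∈ range (N+1), (N.choose i : ℝ) = 2^N := by
      exact_mod_cast congrArg (Nat.cast : ℕ → ℝ) (Nat.sum_range_choose N)
    have h2 : (2:ℝ)^N ≠ 0 := by positivity
    simp only [mul_sub]
    rw [Finset.sum_sub_distrib, ← Finset.sum_mul, hchoose]
    field_simp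
  have h2 : Tendsto (fun N : ℕ =>
      (1/2^N : ℝ) * (∑ i ∈ range (N+1), (N.choose i : ℝ) * b i) - L) atTop (𝓝 0) := by
    have := binmean0 h0
    simpa only [heq] using this
  have := h2.add_const L
  simpa using this

lemma cc_even (m : ℕ) : cc (2*m) = - Real.log (2*m+1) := by
  have h : ((-1:ℝ))^(2*m+1) = -1 := Odd.neg_one_pow ⟨m, by ring⟩
  rw [cc, h]
  push_cast
  ring_nf

lemma cc_odd (m : ℕ) : cc (2*m+1) = Real.log (2*m+2) := by
  have h : ((-1:ℝ))^(2*m+1+1) = 1 := Even.neg_one_pow ⟨m+1, by ring⟩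
  rw [cc, h]
  push_cast
  ring_nf

lemma BB_even (M : ℕ) :
    BB (2*M) = Real.log (∏ i ∈ range M,
      ((2 : ℝ) * i + 2) / (2 * i + 1) * ((2 * i + 2) / (2 * i + 3))) := by
  induction M with
  | zero => simp [BB_zero]
  | succ M ih =>
      have e1 : BB (2*(M+1)) = BB (2*M) + cc (2*M) + 2 * cc (2*M+1) + cc (2*M+2) := by
        have h1 : 2*(M+1) = (2*M+1)+1 := by ring
        rw [h1, BB_succ, BB_succ]
        ring
      have e2 : cc (2*M+2) = - Real.log (2*(M+1)+1) := by
        have : 2*M+2 = 2*(M+1) := by ring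
        rw [this, cc_even]
        push_cast; ring_nf
      rw [e1, cc_even, cc_odd, e2, ih, Finset.prod_range_succ]
      have hx1 : (0:ℝ) < 2*M+1 := by positivity
      have hx2 : (0:ℝ) < 2*M+2 := by positivity
      have hx3 : (0:ℝ) < 2*M+3 := by positivity
      have hprod : (0:ℝ) < ∏ i ∈ range M,
          ((2 : ℝ) * i + 2) / (2 * i + 1) * ((2 * i + 2) / (2 * i + 3)) := by
        refine Finset.prod_pos fun i _ => ?_
        have : (0:ℝ) < (i:ℝ) + 1 := by positivity
        positivity
      rw [Real.log_mul (ne_of_gt hprod) (by positivity),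
          Real.log_mul (by positivity) (by positivity),
          Real.log_div (by positivity) (by positivity),
          Real.log_div (by positivity) (by positivity)]
      have h4 : (2*((M:ℝ)+1)+1) = 2*(M:ℝ)+3 := by ring
      rw [h4]
      ring

lemma BB_tendsto : Tendsto BB atTop (𝓝 (Real.log (π/2))) := by
  have heven : Tendsto (fun M : ℕ => BB (2*M)) atTop (𝓝 (Real.log (π/2))) := by
    have hlog := ((Real.continuousAt_log
      (by positivity : (π/2 : ℝ) ≠ 0)).tendsto).comp Real.tendsto_prod_pi_div_two
    exact hlog.congr fun M => (BB_even M).symm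
  have h1 : Tendsto (fun M : ℕ => (2:ℝ)*M+1) atTop atTop :=
    tendsto_atTop_add_const_right atTop 1
      (tendsto_natCast_atTop_atTop.const_mul_atTop two_pos)
  have hr : Tendsto (fun M : ℕ => ((2:ℝ)*M+2)/(2*M+1)) atTop (𝓝 1) := by
    have h2 : Tendsto (fun M : ℕ => 1 + ((2:ℝ)*M+1)⁻¹) atTop (𝓝 (1+0)) :=
      tendsto_const_nhds.add h1.inv_tendsto_atTop
    rw [add_zero] at h2
    refine h2.congr fun M => ?_
    have : ((2:ℝ)*M+1) ≠ 0 := by positivity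
    field_simp
    ring
  have hdiff : Tendsto (fun M : ℕ => Real.log (2*M+2) - Real.log (2*M+1)) atTop (𝓝 0) := by
    have hl := (Real.continuousAt_log one_ne_zero).tendsto.comp hr
    rw [Real.log_one] at hl
    refine hl.congr fun M => ?_
    simp only [Function.comp]
    rw [Real.log_div (by positivity) (by positivity)]
  have hodd : Tendsto (fun M : ℕ => BB (2*M+1)) atTop (𝓝 (Real.log (π/2))) := by
    have hBB : ∀ M : ℕ, BB (2*M) + (Real.log (2*M+2) - Real.log (2*M+1)) = BB (2*M+1) := by
      intro M
      rw [BB_succ, cc_even, cc_odd]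
      ring
    have := heven.add hdiff
    rw [add_zero] at this
    exact this.congr hBB
  rw [Metric.tendsto_atTop] at heven hodd ⊢
  intro ε hε
  obtain ⟨N₁, hN₁⟩ := heven ε hε
  obtain ⟨N₂, hN₂⟩ := hodd ε hε
  refine ⟨2*N₁+2*N₂+2, fun n hn => ?_⟩
  rcases Nat.even_or_odd n with ⟨m, hm⟩ | ⟨m, hm⟩
  · have h : n = 2*m := by omega
    rw [h]
    exact hN₁ m (by omega)
  · have h : n = 2*m+1 := by omega
    rw [h]
    exact hN₂ m (by omega)

/-- π/2 = ∏_{n=1}^∞ (∏_{k=0}^n (k+1)^{(-1)^{k+1} C(n,k)})^{1/2^n}, with real powers. -/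
theorem stmt_1 :
    Tendsto (fun N : ℕ => ∏ n ∈ Finset.Icc 1 N,
        (∏ k ∈ Finset.range (n + 1),
          ((k + 1 : ℝ)) ^ ((-1 : ℝ) ^ (k + 1) * (n.choose k : ℝ))) ^ ((1 : ℝ) / 2 ^ n))
      atTop (nhds (Real.pi / 2)) := by
  have hS : Tendsto SS atTop (𝓝 (Real.log (π/2))) :=
    (binmean BB_tendsto).congr fun N => (key N).symm
  have hexp : Tendsto (fun N => Real.exp (SS N)) atTop (𝓝 (π/2)) := by
    have := (Real.continuous_exp.tendsto (Real.log (π/2))).comp hS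
    rwa [Real.exp_log (by positivity)] at this
  refine hexp.congr fun N => ?_
  have hQpos : ∀ n : ℕ, 0 < ∏ k ∈ Finset.range (n+1),
      ((k + 1 : ℝ)) ^ ((-1 : ℝ) ^ (k + 1) * (n.choose k : ℝ)) :=
    fun n => Finset.prod_pos fun k _ => Real.rpow_pos_of_pos (by positivity) _
  have hQlog : ∀ n : ℕ, Real.log (∏ k ∈ Finset.range (n+1),
      ((k + 1 : ℝ)) ^ ((-1 : ℝ) ^ (k + 1) * (n.choose k : ℝ)))
      = ∑ k ∈ range (n+1), (n.choose k : ℝ) * cc k := by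
    intro n
    rw [Real.log_prod
      (fun k _ => ne_of_gt (Real.rpow_pos_of_pos (by positivity) _))]
    refine Finset.sum_congr rfl fun k _ => ?_
    rw [Real.log_rpow (by positivity), cc]
    ring
  have hPpos : 0 < ∏ n ∈ Finset.Icc 1 N, (∏ k ∈ Finset.range (n + 1),
      ((k + 1 : ℝ)) ^ ((-1 : ℝ) ^ (k + 1) * (n.choose k : ℝ))) ^ ((1 : ℝ) / 2 ^ n) :=
    Finset.prod_pos fun n _ => Real.rpow_pos_of_pos (hQpos n) _
  have hPlog : Real.log (∏ n ∈ Finset.Icc 1 N, (∏ k ∈ Finset.range (n + 1),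
      ((k + 1 : ℝ)) ^ ((-1 : ℝ) ^ (k + 1) * (n.choose k : ℝ))) ^ ((1 : ℝ) / 2 ^ n))
      = SS N := by
    rw [Real.log_prod
      (fun n _ => ne_of_gt (Real.rpow_pos_of_pos (hQpos n) _))]
    refine Finset.sum_congr rfl fun n _ => ?_
    rw [Real.log_rpow (hQpos n), hQlog n]
  rw [← hPlog, Real.exp_log hPpos]
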